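/- (Probability of a lattice, Eq. (13).) Let a, q : Fin n → ℝ satisfy a i + q i = 1 for all i, and define the probability of a state s ∈ (Fin n → Bool) by P(s) = ∏_{i} (if s i then q i else a i). Then for any s1 ≤ s2, the sum of P(s) over all states s in the interval [s1, s2] equals (∏_{i : s2 i = false} a i) · (∏_{i : s1 i = true} q i). -/
import Mathlib


/- STATEMENT 6 (Probability of a lattice, Eq. (13)): With `a i + q i = 1` for all `i`
and state probability `P s = ∏ i, (if s i then q i else a i)`, the sum of `P s` over all
states `s` in the interval `[s1, s2]` (for `s1 ≤ s2`) equals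
`(∏_{i : s2 i = false} a i) * (∏_{i : s1 i = true} q i)`. -/
open Classical in
theorem lattice_probability (n : ℕ) (a q : Fin n → ℝ) (hsum : ∀ i, a i + q i = 1)
    (s1 s2 : Fin n → Bool) (h : s1 ≤ s2) :
    ∑ s ∈ Finset.univ.filter (fun s : Fin n → Bool => s1 ≤ s ∧ s ≤ s2),
        ∏ i, (if s i then q i else a i) =
      (∏ i ∈ Finset.univ.filter (fun i : Fin n => s2 i = false), a i) *
        ∏ i ∈ Finset.univ.filter (fun i : Fin n => s1 i = true), q i := by
  classical
  set t : Fin n → Finset Bool := fun i => Finset.univ.filter (fun b => s1 i ≤ b ∧ b ≤ s2 i)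
  have hset : Finset.univ.filter (fun s : Fin n → Bool => s1 ≤ s ∧ s ≤ s2)
      = Fintype.piFinset t := by
    ext s
    simp [t, Fintype.mem_piFinset, Pi.le_def, forall_and]
  rw [hset, ← Finset.prod_univ_sum (t := t) (f := fun i b => if b = true then q i else a i)]
  rw [Finset.prod_filter, Finset.prod_filter, ← Finset.prod_mul_distrib]
  refine Finset.prod_congr rfl fun i _ => ?_
  have hi : s1 i ≤ s2 i := h i
  rcases hb1 : s1 i with _ | _ <;> rcases hb2 : s2 i with _ | _ <;>
    simp_all [t, Finset.sum_filter, Bool.le_iff_imp, hsum i, add_comm]
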